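/- arXiv:1803.03120 — 2 statements merged into one kernel-verified Lean document; each statement's English description precedes it below -/
import Mathlib

section
/- Let p_ζ(x) = (1/Σ_n) · (1−r²)/(1−2r cos θ₁ + r²)^{(n+1)/2} be the Poisson kernel on S^n with ζ = r·e₁, r = e^{−ρ} ∈ (0,1), and λ = (n−1)/2. Then the first directional Poisson wavelet g_ρ^{[1]}(x) := ρ · ∂/∂Θ|_{Θ=0} p_ζ(Υ_Θ x) has the explicit form g_ρ^{[1]}(x) = −(2ρ(λ+1) r (1−r²) sin θ₁) / (Σ_n (1−2r cos θ₁ + r²)^{λ+2}) · cos θ₂. -/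
open Real

/-- Surface area `Σ_n = 2π^{(n+1)/2}/Γ((n+1)/2)` of the unit sphere `Sⁿ ⊂ ℝ^{n+1}`. -/
noncomputable def sphereArea (n : ℕ) : ℝ :=
  2 * Real.pi ^ (((n : ℝ) + 1) / 2) / Real.Gamma (((n : ℝ) + 1) / 2)

/-- Poisson kernel on `Sⁿ` at `ζ = r e₁`, as a function of `c = cos θ₁`. -/
noncomputable def poissonKernelSn (n : ℕ) (r : ℝ) (c : ℝ) : ℝ :=
  (1 / sphereArea n) * (1 - r ^ 2) / (1 - 2 * r * c + r ^ 2) ^ (((n : ℝ) + 1) / 2)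

/-- Explicit form of the first directional Poisson wavelet
`g_ρ^{[1]}(x) = ρ · ∂/∂Θ|₀ p_ζ(Υ_Θ x)`; the rotated point `Υ_Θ x` has colatitude cosine
`cos Θ cos θ₁ − sin Θ sin θ₁ cos θ₂`. -/
theorem first_directional_poisson_wavelet (n : ℕ) (hn : 2 ≤ n) (lam : ℝ)
    (hlam : lam = ((n : ℝ) - 1) / 2) (ρ : ℝ) (hρ : 0 < ρ) (r : ℝ) (hr : r = Real.exp (-ρ))
    (θ₁ θ₂ : ℝ) :
    ρ * deriv (fun Θ => poissonKernelSn n r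
        (Real.cos Θ * Real.cos θ₁ - Real.sin Θ * Real.sin θ₁ * Real.cos θ₂)) 0
      = -(2 * ρ * (lam + 1) * r * (1 - r ^ 2) * Real.sin θ₁)
          / (sphereArea n * (1 - 2 * r * Real.cos θ₁ + r ^ 2) ^ (lam + 2))
        * Real.cos θ₂ := by
  have hr0 : 0 < r := hr ▸ Real.exp_pos _
  have hr1 : r < 1 := by rw [hr, Real.exp_lt_one_iff]; linarith
  set D : ℝ := 1 - 2 * r * Real.cos θ₁ + r ^ 2 with hDdef
  have hD : 0 < D := by
    have h1 : (0:ℝ) < (1 - r) ^ 2 := pow_pos (by linarith) 2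
    nlinarith [Real.cos_le_one θ₁]
  have hS : 0 < sphereArea n := by
    unfold sphereArea
    have hx : (0:ℝ) < ((n : ℝ) + 1) / 2 := by positivity
    exact div_pos (by positivity) (Real.Gamma_pos_of_pos hx)
  set e : ℝ := ((n : ℝ) + 1) / 2 with hedef
  have he : e = lam + 1 := by rw [hlam]; ring
  set A : ℝ := 1 / sphereArea n * (1 - r ^ 2) with hAdef
  -- derivative of the inner cosine function
  have hc : HasDerivAt (fun Θ => Real.cos Θ * Real.cos θ₁ - Real.sin Θ * Real.sin θ₁ * Real.cos θ₂)
      (-(Real.sin θ₁ * Real.cos θ₂)) 0 := by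
    have h1 := (Real.hasDerivAt_cos 0).mul_const (Real.cos θ₁)
    have h2 := ((Real.hasDerivAt_sin 0).mul_const (Real.sin θ₁)).mul_const (Real.cos θ₂)
    exact (h1.sub h2).congr_deriv (by simp)
  have hg : HasDerivAt (fun Θ => 1 - 2 * r *
      (Real.cos Θ * Real.cos θ₁ - Real.sin Θ * Real.sin θ₁ * Real.cos θ₂) + r ^ 2)
      (2 * r * (Real.sin θ₁ * Real.cos θ₂)) 0 := by
    have := ((hc.const_mul (2 * r)).const_sub 1).add_const (r ^ 2)
    refine this.congr_deriv ?_
    ring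
  have hg0 : 1 - 2 * r *
      (Real.cos 0 * Real.cos θ₁ - Real.sin 0 * Real.sin θ₁ * Real.cos θ₂) + r ^ 2 = D := by
    simp [hDdef]
  have hgpow : HasDerivAt (fun Θ => (1 - 2 * r *
      (Real.cos Θ * Real.cos θ₁ - Real.sin Θ * Real.sin θ₁ * Real.cos θ₂) + r ^ 2) ^ e)
      (2 * r * (Real.sin θ₁ * Real.cos θ₂) * e * D ^ (e - 1)) 0 := by
    have := hg.rpow_const (p := e) (Or.inl (by simp only [hg0]; exact hD.ne'))
    simp only [hg0] at this
    exact this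
  have hDe : (0:ℝ) < D ^ e := Real.rpow_pos_of_pos hD e
  have hf : HasDerivAt (fun Θ => poissonKernelSn n r
      (Real.cos Θ * Real.cos θ₁ - Real.sin Θ * Real.sin θ₁ * Real.cos θ₂))
      ((0 * D ^ e - A * (2 * r * (Real.sin θ₁ * Real.cos θ₂) * e * D ^ (e - 1))) / (D ^ e) ^ 2) 0 := by
    have := (hasDerivAt_const (0:ℝ) A).div hgpow (by simp only [hg0]; exact hDe.ne')
    simp only [hg0] at this
    have hfun : (fun Θ => poissonKernelSn n r
        (Real.cos Θ * Real.cos θ₁ - Real.sin Θ * Real.sin θ₁ * Real.cos θ₂))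
        = (fun Θ => A / (1 - 2 * r *
          (Real.cos Θ * Real.cos θ₁ - Real.sin Θ * Real.sin θ₁ * Real.cos θ₂) + r ^ 2) ^ e) := by
      funext Θ
      simp only [poissonKernelSn, hAdef, hedef, div_div]
    rw [hfun]
    exact this
  rw [hf.deriv, he]
  have key : D ^ (lam + 1 + 1) * D ^ (lam + 1 - 1) = (D ^ (lam + 1)) ^ 2 := by
    rw [← Real.rpow_add hD, sq, ← Real.rpow_add hD]
    ring_nf
  have h1 : (D ^ (lam + 1)) ^ 2 ≠ 0 := by positivity
  have h2 : D ^ (lam + 1 + 1) ≠ 0 := (Real.rpow_pos_of_pos hD _).ne'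
  have h3 : lam + 2 = lam + 1 + 1 := by ring
  rw [h3]
  rw [hAdef]
  have key2 : D ^ (lam + 1 + 1) * D ^ lam = (D ^ (lam + 1)) ^ 2 := by
    rw [← Real.rpow_add hD, sq, ← Real.rpow_add hD]
    ring_nf
  field_simp
  linear_combination (-(2 * (lam + 1) * r * (1 - r ^ 2) * Real.sin θ₁ * Real.cos θ₂)) * key
end

section
/- Let p_ζ be the Poisson kernel on S^n at ζ = e^{−ρ} e₁ and S^{−1} the inverse stereographic projection from ℝ^n to S^n (with S^{−1}(0) = e₁). Then for every ξ ∈ ℝ^n, lim_{ρ→0⁺} ρ^n · p_{e^{−ρ}e₁}(S^{−1}(ρξ)) = 2/(Σ_n (1+|ξ|²)^{λ+1}), where λ = (n−1)/2 and Σ_n is the surface area of S^n. -/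
open Filter

/-- Poisson kernel on `Sⁿ` at `ζ = r e₁`, as a function of `c = cos θ₁`. -/
noncomputable def sphereStatPoissonKernel (n : ℕ) (r : ℝ) (c : ℝ) : ℝ :=
  (1 / sphereArea n) * (1 - r ^ 2) / (1 - 2 * r * c + r ^ 2) ^ (((n : ℝ) + 1) / 2)

lemma cos_two_arctan' (x : ℝ) :
    Real.cos (2 * Real.arctan x) = (1 - x ^ 2) / (1 + x ^ 2) := by
  have h : (0:ℝ) < 1 + x ^ 2 := by positivity
  rw [Real.cos_two_mul, Real.cos_arctan]
  rw [div_pow, one_pow, Real.sq_sqrt h.le]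
  field_simp
  ring

lemma slope_limit (a : ℝ) :
    Tendsto (fun ρ : ℝ => (1 - Real.exp (a * ρ)) / ρ) (nhdsWithin 0 (Set.Ioi 0))
      (nhds (-a)) := by
  have hd : HasDerivAt (fun x : ℝ => Real.exp (a * x)) a 0 := by
    have h1 : HasDerivAt (fun x : ℝ => a * x) a 0 := by
      simpa using (hasDerivAt_id (0:ℝ)).const_mul a
    simpa using h1.exp
  have := hasDerivAt_iff_tendsto_slope.mp hd
  have hmono : nhdsWithin (0:ℝ) (Set.Ioi 0) ≤ nhdsWithin 0 {0}ᶜ :=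
    nhdsWithin_mono 0 (fun x hx => ne_of_gt hx)
  have h2 := (this.mono_left hmono).neg
  refine h2.congr (fun ρ => ?_)
  simp [slope_def_field, div_eq_mul_inv]
  ring

/-- Euclidean limit of the Poisson kernel: the inverse stereographic projection
`S⁻¹(ρξ)` has colatitude `θ₁ = 2 arctan(ρ‖ξ‖/2)`, so that
`ρⁿ p_{e^{-ρ}e₁}(S⁻¹(ρξ)) → 2/(Σ_n (1+‖ξ‖²)^{λ+1})` as `ρ → 0⁺`. -/
theorem poisson_kernel_euclidean_limit (n : ℕ) (hn : 2 ≤ n) (lam : ℝ)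
    (hlam : lam = ((n : ℝ) - 1) / 2) (ξ : EuclideanSpace ℝ (Fin n)) :
    Tendsto (fun ρ : ℝ => ρ ^ n * sphereStatPoissonKernel n (Real.exp (-ρ))
        (Real.cos (2 * Real.arctan (ρ * ‖ξ‖ / 2))))
      (nhdsWithin 0 (Set.Ioi 0))
      (nhds (2 / (sphereArea n * (1 + ‖ξ‖ ^ 2) ^ (lam + 1)))) := by
  set s : ℝ := ((n : ℝ) + 1) / 2 with hs
  set Sn : ℝ := sphereArea n with hSn
  set K : ℝ := ‖ξ‖ with hK
  have hK0 : 0 ≤ K := norm_nonneg _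
  set D : ℝ → ℝ := fun ρ =>
    1 - 2 * Real.exp (-ρ) * Real.cos (2 * Real.arctan (ρ * K / 2)) + Real.exp (-ρ) ^ 2
    with hD
  -- positivity of D on Ioi 0
  have hDpos : ∀ ρ : ℝ, 0 < ρ → 0 < D ρ := by
    intro ρ hρ
    have hr1 : Real.exp (-ρ) < 1 := by
      rw [Real.exp_lt_one_iff]; linarith
    have hrpos := Real.exp_pos (-ρ)
    have hc := Real.cos_le_one (2 * Real.arctan (ρ * K / 2))
    have h1 : (0:ℝ) < (1 - Real.exp (-ρ)) ^ 2 := by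
      have : (0:ℝ) < 1 - Real.exp (-ρ) := by linarith
      positivity
    simp only [hD]
    nlinarith [mul_nonneg hrpos.le (sub_nonneg.2 hc)]
  -- limit of D ρ / ρ^2
  have hDlim : Tendsto (fun ρ => D ρ / ρ ^ 2) (nhdsWithin 0 (Set.Ioi 0))
      (nhds (1 + K ^ 2)) := by
    have heq : ∀ ρ ∈ Set.Ioi (0:ℝ),
        (((1 - Real.exp ((-1) * ρ)) / ρ) ^ 2 + (K / 2) ^ 2 * (1 + Real.exp (-ρ)) ^ 2)
          / (1 + (ρ * K / 2) ^ 2) = D ρ / ρ ^ 2 := by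
      intro ρ hρ
      have hρ0 : ρ ≠ 0 := ne_of_gt hρ
      have ht : (0:ℝ) < 1 + (ρ * K / 2) ^ 2 := by positivity
      rw [hD]
      simp only [cos_two_arctan']
      rw [neg_one_mul]
      field_simp
      ring
    have hexp : Tendsto (fun ρ : ℝ => Real.exp (-ρ)) (nhdsWithin 0 (Set.Ioi 0))
        (nhds 1) := by
      have : Tendsto (fun ρ : ℝ => Real.exp (-ρ)) (nhds 0) (nhds (Real.exp (-0))) :=
        (Real.continuous_exp.comp continuous_neg).tendsto 0
      simpa using this.mono_left nhdsWithin_le_nhds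
    have hB : Tendsto (fun ρ : ℝ => (1 - Real.exp ((-1) * ρ)) / ρ)
        (nhdsWithin 0 (Set.Ioi 0)) (nhds 1) := by
      simpa using slope_limit (-1)
    have hden : Tendsto (fun ρ : ℝ => 1 + (ρ * K / 2) ^ 2)
        (nhdsWithin 0 (Set.Ioi 0)) (nhds 1) := by
      have : Tendsto (fun ρ : ℝ => 1 + (ρ * K / 2) ^ 2) (nhds 0)
          (nhds (1 + (0 * K / 2) ^ 2)) := by
        apply Continuous.tendsto; continuity
      simpa using this.mono_left nhdsWithin_le_nhds
    have hnum : Tendsto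
        (fun ρ : ℝ => ((1 - Real.exp ((-1) * ρ)) / ρ) ^ 2
          + (K / 2) ^ 2 * (1 + Real.exp (-ρ)) ^ 2)
        (nhdsWithin 0 (Set.Ioi 0)) (nhds (1 ^ 2 + (K / 2) ^ 2 * (1 + 1) ^ 2)) :=
      (hB.pow 2).add (tendsto_const_nhds.mul ((tendsto_const_nhds.add hexp).pow 2))
    have h := hnum.div hden one_ne_zero
    have hval : (1 ^ 2 + (K / 2) ^ 2 * (1 + 1) ^ 2) / 1 = 1 + K ^ 2 := by ring
    rw [hval] at h
    exact Tendsto.congr' (eventuallyEq_of_mem self_mem_nhdsWithin heq) h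
  -- limit of ρ^2 / D ρ
  have hX : (0:ℝ) < 1 + K ^ 2 := by positivity
  have hClim : Tendsto (fun ρ => ρ ^ 2 / D ρ) (nhdsWithin 0 (Set.Ioi 0))
      (nhds ((1 + K ^ 2)⁻¹)) := by
    have := hDlim.inv₀ (ne_of_gt hX)
    refine this.congr (fun ρ => ?_)
    rw [inv_div]
  have hCr : Tendsto (fun ρ => (ρ ^ 2 / D ρ) ^ s) (nhdsWithin 0 (Set.Ioi 0))
      (nhds (((1 + K ^ 2)⁻¹) ^ s)) :=
    hClim.rpow_const (Or.inl (by positivity))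
  have hA : Tendsto (fun ρ : ℝ => (1 - Real.exp (-2 * ρ)) / ρ)
      (nhdsWithin 0 (Set.Ioi 0)) (nhds 2) := by
    simpa using slope_limit (-2)
  have hmain : Tendsto
      (fun ρ : ℝ => 1 / Sn * ((1 - Real.exp (-2 * ρ)) / ρ) * (ρ ^ 2 / D ρ) ^ s)
      (nhdsWithin 0 (Set.Ioi 0))
      (nhds (1 / Sn * 2 * ((1 + K ^ 2)⁻¹) ^ s)) :=
    (tendsto_const_nhds.mul hA).mul hCr
  -- identify the limit value
  have hval : 1 / Sn * 2 * ((1 + K ^ 2)⁻¹) ^ s = 2 / (Sn * (1 + K ^ 2) ^ (lam + 1)) := by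
    have hse : lam + 1 = s := by rw [hlam, hs]; ring
    rw [hse, Real.inv_rpow hX.le, div_eq_mul_inv, div_eq_mul_inv, mul_inv]
    ring
  rw [← hval]
  refine Tendsto.congr' (eventuallyEq_of_mem self_mem_nhdsWithin (fun ρ hρ => ?_)) hmain
  -- pointwise equality on Ioi 0
  have hρ : (0:ℝ) < ρ := hρ
  have hDp := hDpos ρ hρ
  have hpow : (ρ ^ 2 / D ρ) ^ s = ρ ^ (n + 1) / (D ρ) ^ s := by
    rw [Real.div_rpow (sq_nonneg ρ) hDp.le]
    congr 1
    rw [← Real.rpow_natCast ρ 2, ← Real.rpow_natCast ρ (n + 1),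
      ← Real.rpow_mul hρ.le]
    congr 1
    push_cast [hs]
    ring
  have hr2 : Real.exp (-ρ) ^ 2 = Real.exp (-2 * ρ) := by
    rw [← Real.exp_nat_mul]; norm_num
  symm
  rw [sphereStatPoissonKernel, hpow]
  rw [show (1 - 2 * Real.exp (-ρ) * Real.cos (2 * Real.arctan (ρ * K / 2))
      + Real.exp (-ρ) ^ 2) = D ρ from rfl, hr2]
  have hDs : (0:ℝ) < (D ρ) ^ s := Real.rpow_pos_of_pos hDp s
  rw [pow_succ]
  rw [show (1:ℝ) / Sn * ((1 - Real.exp (-2 * ρ)) / ρ) * (ρ ^ n * ρ / D ρ ^ s)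
      = 1 / Sn * ((1 - Real.exp (-2 * ρ)) / ρ * ρ) * (ρ ^ n / D ρ ^ s) from by ring,
    div_mul_cancel₀ _ hρ.ne']
  ring
end
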